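/- arXiv:1411.7739 — 2 statements merged into one kernel-verified Lean document; each statement's English description precedes it below -/
import Mathlib

section
/- (Bound on the propagated bad-block event, inequality (4.28).) Let L₁, L₂ be positive integers, J > 0, h > 0 with h < 2J/L₁ + 2J/L₂, N ≥ 2 even, and β ≥ 0. Let Λ = Λ₁ × Λ₂ with Λ_i = {r ∈ ℤ : |r + 1/2| ≤ L_i/2}, so |Λ_i| = B_i where B_i = L_i if L_i is even and B_i = L_i + 1 if L_i is odd. For i = 1,2 let ρ_i : ℤ/NL_iℤ → Λ_i be the fold map sending t to the unique r ∈ Λ_i with t ≡ r (mod 2L_i) or t ≡ L_i − 1 − r (mod 2L_i). For a block configuration σ_Λ : Λ → {−1,+1} define its propagation σ_{Λ,N} ∈ {−1,+1}^{𝕋_N} by σ_{Λ,N}(t₁,t₂) = σ_Λ(ρ₁(t₁), ρ₂(t₂)), and let R(Λ) be the set of non-constant block configurations on Λ. Then ( Σ_{σ_Λ ∈ R(Λ)} e^{−βH_N(σ_{Λ,N})} / Z_N(β) )^{1/N²} ≤ 2^{B₁B₂} · exp(−β·(2J − h·L₁L₂/(L₁+L₂))). -/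
/-- The ±1 spin value of a Boolean spin configuration on the torus `(ℤ/aℤ) × (ℤ/bℤ)`. -/
noncomputable def spin {a b : ℕ} (σ : ZMod a × ZMod b → Bool) (t : ZMod a × ZMod b) : ℝ :=
  if σ t then 1 else -1

/-- Torus Hamiltonian with coupling `J` and external field `hf`:
`H(σ) = −J Σ_t [σ(t)σ(t+e₁) + σ(t)σ(t+e₂)] − Σ_t hf(t)σ(t)`. -/
noncomputable def ham {a b : ℕ} [NeZero a] [NeZero b] (J : ℝ)
    (hf : ZMod a × ZMod b → ℝ) (σ : ZMod a × ZMod b → Bool) : ℝ :=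
  -J * ∑ t, (spin σ t * spin σ (t + (1, 0)) + spin σ t * spin σ (t + (0, 1)))
    - ∑ t, hf t * spin σ t

/-- Cell-board external field on the torus, via canonical representatives:
`+h` if `⌊t₁/L₁⌋ + ⌊t₂/L₂⌋` is even, `−h` otherwise. -/
noncomputable def cellField {a b : ℕ} (L1 L2 : ℕ) (h : ℝ) (t : ZMod a × ZMod b) : ℝ :=
  if Even (t.1.val / L1 + t.2.val / L2) then h else -h

/-- Partition function `Z(β) = Σ_σ e^{−βH(σ)}`. -/
noncomputable def Zfun {a b : ℕ} [NeZero a] [NeZero b] (β J : ℝ)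
    (hf : ZMod a × ZMod b → ℝ) : ℝ :=
  ∑ σ : ZMod a × ZMod b → Bool, Real.exp (-β * ham J hf σ)

/-- Gibbs probability of a (finite) set of configurations. -/
noncomputable def gibbs {a b : ℕ} [NeZero a] [NeZero b] (β J : ℝ)
    (hf : ZMod a × ZMod b → ℝ) (E : Finset (ZMod a × ZMod b → Bool)) : ℝ :=
  (∑ σ ∈ E, Real.exp (-β * ham J hf σ)) / Zfun β J hf

/-- `Λ_i = {r ∈ ℤ : |r + 1/2| ≤ L/2}`, an interval of `B` consecutive integers,
where `B = L` for even `L` and `B = L+1` for odd `L`. -/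
noncomputable def lamF (L : ℕ) : Finset ℤ :=
  Finset.Icc (-(((L : ℤ) + 1) / 2)) (((L : ℤ) - 1) / 2)

/-- The block `Λ = Λ₁ × Λ₂`. -/
noncomputable def blockF (L1 L2 : ℕ) : Finset (ℤ × ℤ) := lamF L1 ×ˢ lamF L2

/-- `B_i = |Λ_i|`: `L` if `L` is even, `L+1` if `L` is odd. -/
def Bside (L : ℕ) : ℕ := if Even L then L else L + 1

/-- The fold map `ρ` sending a residue `v ∈ [0, NL)` to the unique `r ∈ Λ` with
`v ≡ r (mod 2L)` or `v ≡ L − 1 − r (mod 2L)`. -/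
def fold (L : ℕ) (v : ℕ) : ℤ :=
  let m : ℤ := (v : ℤ) % (2 * L)
  if m ≤ ((L : ℤ) - 1) / 2 then m
  else if m ≤ (L : ℤ) - 1 + ((L : ℤ) + 1) / 2 then (L : ℤ) - 1 - m
  else m - 2 * L

/-- The propagation `σ_{Λ,N}` of a block configuration `σ_Λ : Λ → {−1,+1}`:
`σ_{Λ,N}(t₁,t₂) = σ_Λ(ρ₁(t₁), ρ₂(t₂))`. -/
noncomputable def propagate (L1 L2 N : ℕ)
    (σΛ : {x : ℤ × ℤ // x ∈ blockF L1 L2} → Bool) :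
    ZMod (N * L1) × ZMod (N * L2) → Bool :=
  fun t =>
    if hx : (fold L1 t.1.val, fold L2 t.2.val) ∈ blockF L1 L2
    then σΛ ⟨(fold L1 t.1.val, fold L2 t.2.val), hx⟩ else true

/-! ### Auxiliary lemmas -/

section Aux

lemma per_mod {α : Type*} (f : ℕ → α) (p : ℕ) (hp : 0 < p) (hf : ∀ n, f (n + p) = f n) (n : ℕ) :
    f n = f (n % p) := by
  induction n using Nat.strong_induction_on with
  | _ n ih =>
    by_cases hn : n < p
    · rw [Nat.mod_eq_of_lt hn]
    · push_neg at hn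
      have h1 : n = (n - p) + p := by omega
      have h2 : f n = f (n - p) := by conv_lhs => rw [h1, hf]
      rw [h2, ih (n - p) (by omega), Nat.mod_eq_sub_mod hn]

lemma per_add_mul {α : Type*} (f : ℕ → α) (p : ℕ) (hf : ∀ n, f (n + p) = f n) (m n : ℕ) :
    f (m * p + n) = f n := by
  induction m with
  | zero => simp
  | succ k ih => have h : (k+1) * p + n = (k * p + n) + p := by ring
                 rw [h, hf, ih]

lemma sum_periodic_mul (w : ℕ → ℝ) (p k : ℕ) (hw : ∀ n, w (n + p) = w n) :
    ∑ n ∈ Finset.range (k * p), w n = k * ∑ n ∈ Finset.range p, w n := by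
  induction k with
  | zero => simp
  | succ m ih =>
    have h1 : (m + 1) * p = m * p + p := by ring
    rw [h1, Finset.sum_range_add, ih]
    rw [Finset.sum_congr rfl (fun x _ => per_add_mul w p hw m x)]
    push_cast; ring

lemma sum_window (w : ℕ → ℝ) (p : ℕ) (hp : 0 < p) (hw : ∀ n, w (n + p) = w n) (r : ℕ) :
    ∑ n ∈ Finset.Ico r (r + p), w n = ∑ n ∈ Finset.range p, w n := by
  induction r with
  | zero => rw [Finset.range_eq_Ico]; norm_num
  | succ m ih =>
    have h1 : ∑ n ∈ Finset.Ico (m+1) (m+1+p), w n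
        = ∑ n ∈ Finset.Ico (m+1) (m+p), w n + w (m + p) := by
      have h : m+1+p = (m+p) + 1 := by omega
      rw [h, Finset.sum_Ico_succ_top (by omega)]
    have h2 : ∑ n ∈ Finset.Ico m (m+p), w n
        = w m + ∑ n ∈ Finset.Ico (m+1) (m+p), w n := by
      rw [Finset.sum_eq_sum_Ico_succ_bot (by omega)]
    rw [h1, hw m]
    rw [h2] at ih
    linarith [ih]

lemma discrete_ivt (F : ℕ → Bool) (a b : ℕ) (hab : a ≤ b) (hF : F a ≠ F b) :
    ∃ i, a ≤ i ∧ i < b ∧ F i ≠ F (i + 1) := by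
  induction b with
  | zero => have h : a = 0 := by omega
            exact absurd (h ▸ rfl) hF
  | succ m ih =>
    rcases eq_or_lt_of_le hab with rfl | h
    · exact absurd rfl hF
    · have ham : a ≤ m := by omega
      by_cases hm : F a = F m
      · exact ⟨m, ham, Nat.lt_succ_self m, fun he => hF (hm.trans he)⟩
      · obtain ⟨i, h1, h2, h3⟩ := ih ham hm
        exact ⟨i, h1, by omega, h3⟩

noncomputable def bval (F : ℕ → Bool) (n : ℕ) : ℝ := if F n then 1 else -1

noncomputable def psiv (L Lo : ℕ) (h : ℝ) (u v : ℕ) : ℝ :=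
  if Even (u / L + v / Lo) then h else -h

lemma bval_sq (F : ℕ → Bool) (n : ℕ) : bval F n = 1 ∨ bval F n = -1 := by
  unfold bval; split_ifs <;> simp

lemma w_nonneg (F : ℕ → Bool) (n : ℕ) : 0 ≤ 1 - bval F n * bval F (n + 1) := by
  rcases bval_sq F n with h | h <;> rcases bval_sq F (n+1) with h' | h' <;>
    rw [h, h'] <;> norm_num

lemma w_eq_two (F : ℕ → Bool) (n : ℕ) (h : F n ≠ F (n + 1)) :
    1 - bval F n * bval F (n + 1) = 2 := by
  unfold bval
  cases hn : F n <;> cases hm : F (n+1) <;> simp_all <;> norm_num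

lemma two_changes (F : ℕ → Bool) (p : ℕ) (hp : 0 < p) (hF : ∀ n, F (n + p) = F n)
    (r₁ r₂ : ℕ) (h12 : r₁ < r₂) (h2p : r₂ < p) (hne : F r₁ ≠ F r₂) :
    4 ≤ ∑ n ∈ Finset.range p, (1 - bval F n * bval F (n + 1)) := by
  set w : ℕ → ℝ := fun n => 1 - bval F n * bval F (n + 1) with hw
  have hwper : ∀ n, w (n + p) = w n := by
    intro n; simp only [hw, bval, hF n, show n + p + 1 = (n+1) + p by omega, hF (n+1)]
  obtain ⟨i₁, hi₁a, hi₁b, hi₁⟩ := discrete_ivt F r₁ r₂ (by omega) hne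
  have hr1p : F r₂ ≠ F (r₁ + p) := by rw [hF r₁]; exact fun he => hne he.symm
  obtain ⟨i₂, hi₂a, hi₂b, hi₂⟩ := discrete_ivt F r₂ (r₁ + p) (by omega) hr1p
  have hwin : ∑ n ∈ Finset.range p, w n = ∑ n ∈ Finset.Ico r₁ (r₁ + p), w n :=
    (sum_window w p hp hwper r₁).symm
  rw [hwin]
  have hsub : ({i₁, i₂} : Finset ℕ) ⊆ Finset.Ico r₁ (r₁ + p) := by
    intro x hx
    simp only [Finset.mem_insert, Finset.mem_singleton] at hx
    rcases hx with rfl | rfl <;> simp only [Finset.mem_Ico] <;> omega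
  have hne12 : i₁ ≠ i₂ := by omega
  have hpair : ∑ n ∈ ({i₁, i₂} : Finset ℕ), w n = 4 := by
    rw [Finset.sum_insert (by simp [hne12]), Finset.sum_singleton]
    simp only [hw]
    rw [w_eq_two F i₁ hi₁, w_eq_two F i₂ hi₂]; norm_num
  calc (4:ℝ) = ∑ n ∈ ({i₁, i₂} : Finset ℕ), w n := hpair.symm
    _ ≤ ∑ n ∈ Finset.Ico r₁ (r₁ + p), w n :=
        Finset.sum_le_sum_of_subset_of_nonneg hsub (fun i _ _ => w_nonneg F i)

lemma row_bond (p k : ℕ) (hp : 0 < p) (F : ℕ → Bool) (hF : ∀ n, F (n + p) = F n)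
    (hnc : ∃ n m, F n ≠ F m) :
    4 * (k : ℝ) ≤ ∑ n ∈ Finset.range (k * p), (1 - bval F n * bval F (n + 1)) := by
  set w : ℕ → ℝ := fun n => 1 - bval F n * bval F (n + 1) with hw
  have hwper : ∀ n, w (n + p) = w n := by
    intro n; simp only [hw, bval, hF n, show n + p + 1 = (n+1) + p by omega, hF (n+1)]
  rw [sum_periodic_mul w p k hwper]
  have h4 : 4 ≤ ∑ n ∈ Finset.range p, w n := by
    obtain ⟨n, m, hnm⟩ := hnc
    have hn' : F n = F (n % p) := per_mod F p hp hF n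
    have hm' : F m = F (m % p) := per_mod F p hp hF m
    have hmod : F (n % p) ≠ F (m % p) := by rw [← hn', ← hm']; exact hnm
    rcases Nat.lt_trichotomy (n % p) (m % p) with h | h | h
    · exact two_changes F p hp hF _ _ h (Nat.mod_lt _ hp) hmod
    · exact absurd (h ▸ rfl) hmod
    · exact two_changes F p hp hF _ _ h (Nat.mod_lt _ hp) hmod.symm
  calc 4 * (k:ℝ) ≤ (k:ℝ) * ∑ n ∈ Finset.range p, w n := by
        rcases Nat.eq_zero_or_pos k with rfl | hk
        · simp
        · have : (0:ℝ) < k := by exact_mod_cast hk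
          nlinarith
    _ = _ := rfl

lemma psiv_anti (L Lo : ℕ) (hL : 0 < L) (h : ℝ) (v : ℕ) (u : ℕ) :
    psiv L Lo h (u + L) v = -psiv L Lo h u v := by
  unfold psiv
  rw [Nat.add_div_right u hL]
  have h1 : u / L + 1 + v / Lo = (u / L + v / Lo) + 1 := by omega
  rw [h1]
  by_cases he : Even (u / L + v / Lo)
  · rw [if_pos he, if_neg (by simp [Nat.even_add_one, he])]
  · rw [if_neg he, if_pos (by simp [Nat.even_add_one, he]), neg_neg]

lemma psiv_per (L Lo : ℕ) (hL : 0 < L) (h : ℝ) (v : ℕ) (u : ℕ) :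
    psiv L Lo h (u + 2 * L) v = psiv L Lo h u v := by
  have h1 : u + 2 * L = (u + L) + L := by omega
  rw [h1, psiv_anti L Lo hL h v (u + L), psiv_anti L Lo hL h v u, neg_neg]

lemma psiv_swap (L Lo : ℕ) (h : ℝ) (u v : ℕ) :
    psiv L Lo h u v = psiv Lo L h v u := by
  unfold psiv; rw [Nat.add_comm]

lemma field_row_zero (L Lo N : ℕ) (hL : 0 < L) (hNe : Even N) (h : ℝ) (v : ℕ) :
    ∑ u ∈ Finset.range (N * L), psiv L Lo h u v = 0 := by
  obtain ⟨M, hM⟩ := hNe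
  have hNL : N * L = M * (2 * L) := by rw [hM]; ring
  rw [hNL, sum_periodic_mul _ _ _ (psiv_per L Lo hL h v)]
  have h2L : ∑ u ∈ Finset.range (2 * L), psiv L Lo h u v = 0 := by
    have h1 : 2 * L = L + L := by omega
    rw [h1, Finset.sum_range_add]
    have h2 : ∀ x, psiv L Lo h (L + x) v = -psiv L Lo h x v := by
      intro x; rw [Nat.add_comm L x]; exact psiv_anti L Lo hL h v x
    rw [Finset.sum_congr rfl (fun x _ => h2 x), ← Finset.sum_add_distrib]
    simp
  rw [h2L, mul_zero]

lemma field_row_bound (a : ℕ) (L Lo : ℕ) (h : ℝ) (hh : 0 ≤ h) (v : ℕ) (F : ℕ → Bool) :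
    ∑ u ∈ Finset.range a, psiv L Lo h u v * bval F u ≤ a * h := by
  have h1 : ∀ u ∈ Finset.range a, psiv L Lo h u v * bval F u ≤ h := by
    intro u _
    rcases bval_sq F u with hb | hb <;> unfold psiv <;> split_ifs <;> rw [hb] <;> nlinarith
  calc ∑ u ∈ Finset.range a, psiv L Lo h u v * bval F u ≤ ∑ u ∈ Finset.range a, h :=
        Finset.sum_le_sum h1
    _ = a * h := by rw [Finset.sum_const, Finset.card_range, nsmul_eq_mul]

noncomputable def ncCount (b : ℕ) (T : ℕ → ℕ → Bool) : ℕ :=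
  @Finset.card _ (@Finset.filter _ (fun v => ∃ u u', T u v ≠ T u' v)
    (Classical.decPred _) (Finset.range b))

lemma dir_bond (L Lo N : ℕ) (T : ℕ → ℕ → Bool) (hL : 0 < L) (hNe : Even N)
    (hT : ∀ u v, T (u + 2 * L) v = T u v) :
    2 * (N : ℝ) * (ncCount (N * Lo) T : ℝ) ≤
      ∑ v ∈ Finset.range (N * Lo), ∑ u ∈ Finset.range (N * L),
        (1 - bval (fun u => T u v) u * bval (fun u => T u v) (u + 1)) := by
  classical
  obtain ⟨M, hM⟩ := hNe
  have key : ∀ v, (if ∃ u u', T u v ≠ T u' v then 2 * (N:ℝ) else 0) ≤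
      ∑ u ∈ Finset.range (N * L), (1 - bval (fun u => T u v) u * bval (fun u => T u v) (u + 1)) := by
    intro v
    split_ifs with hv
    · have hNL : N * L = M * (2 * L) := by rw [hM]; ring
      rw [hNL]
      have h1 := row_bond (2 * L) M (by omega) (fun u => T u v) (fun u => hT u v) hv
      calc 2 * (N:ℝ) = 4 * (M:ℝ) := by rw [hM]; push_cast; ring
        _ ≤ _ := h1
    · exact Finset.sum_nonneg fun u _ => w_nonneg _ u
  calc 2 * (N : ℝ) * (ncCount (N * Lo) T : ℝ)
      = ∑ v ∈ Finset.range (N * Lo), (if ∃ u u', T u v ≠ T u' v then 2 * (N:ℝ) else 0) := by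
        rw [Finset.sum_ite, Finset.sum_const, Finset.sum_const]
        unfold ncCount
        simp only [smul_zero, add_zero, nsmul_eq_mul]
        rw [mul_comm]
    _ ≤ _ := Finset.sum_le_sum fun v _ => key v

lemma dir_field (L Lo N : ℕ) (T : ℕ → ℕ → Bool) (h : ℝ) (hL : 0 < L) (hNe : Even N)
    (hh : 0 ≤ h) :
    ∑ v ∈ Finset.range (N * Lo), ∑ u ∈ Finset.range (N * L),
        psiv L Lo h u v * bval (fun u => T u v) u
      ≤ h * (N * L : ℕ) * (ncCount (N * Lo) T : ℝ) := by
  classical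
  have key : ∀ v, ∑ u ∈ Finset.range (N * L), psiv L Lo h u v * bval (fun u => T u v) u
      ≤ (if ∃ u u', T u v ≠ T u' v then h * (N * L : ℕ) else 0) := by
    intro v
    split_ifs with hv
    · calc _ ≤ ((N * L : ℕ) : ℝ) * h := field_row_bound (N * L) L Lo h hh v _
        _ = h * (N * L : ℕ) := by ring
    · push_neg at hv
      calc ∑ u ∈ Finset.range (N * L), psiv L Lo h u v * bval (fun u => T u v) u
          = ∑ u ∈ Finset.range (N * L), psiv L Lo h u v * bval (fun u => T u v) 0 := by
            exact Finset.sum_congr rfl fun u _ => by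
              simp only [bval, hv u 0]
        _ = (∑ u ∈ Finset.range (N * L), psiv L Lo h u v) * bval (fun u => T u v) 0 := by
            rw [Finset.sum_mul]
        _ = 0 := by rw [field_row_zero L Lo N hL hNe h v, zero_mul]
        _ ≤ 0 := le_refl 0
  calc _ ≤ ∑ v ∈ Finset.range (N * Lo), (if ∃ u u', T u v ≠ T u' v then h * (N * L : ℕ) else 0) :=
        Finset.sum_le_sum fun v _ => key v
    _ = h * (N * L : ℕ) * (ncCount (N * Lo) T : ℝ) := by
        rw [Finset.sum_ite, Finset.sum_const, Finset.sum_const]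
        unfold ncCount
        simp only [smul_zero, add_zero, nsmul_eq_mul]
        rw [mul_comm]

lemma dir_count_ge (L Lo N : ℕ) (T : ℕ → ℕ → Bool) (hLo : 0 < Lo) (hNe : Even N)
    (hT2 : ∀ u v, T u (v + 2 * Lo) = T u v)
    (hpos : 1 ≤ ncCount (N * Lo) T) :
    N / 2 ≤ ncCount (N * Lo) T := by
  classical
  obtain ⟨M, hM⟩ := hNe
  unfold ncCount at *
  have hpos' : (Finset.filter (fun v => ∃ u u', T u v ≠ T u' v) (Finset.range (N * Lo))).Nonempty :=
    Finset.card_pos.mp hpos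
  obtain ⟨v₀, hv₀⟩ := hpos'
  rw [Finset.mem_filter] at hv₀
  obtain ⟨hv₀r, u₁, u₂, hne⟩ := hv₀
  set c := v₀ % (2 * Lo) with hc
  have hclt : c < 2 * Lo := Nat.mod_lt _ (by omega)
  have hrow : ∀ u v, v % (2 * Lo) = c → T u v = T u v₀ := by
    intro u v hvc
    have h1 : T u v = T u (v % (2 * Lo)) :=
      per_mod (fun v => T u v) (2 * Lo) (by omega) (fun n => hT2 u n) v
    have h2 : T u v₀ = T u c :=
      per_mod (fun v => T u v) (2 * Lo) (by omega) (fun n => hT2 u n) v₀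
    rw [h1, h2, hvc]
  have hmem : ∀ k ∈ Finset.range M,
      c + 2 * Lo * k ∈ Finset.filter (fun v => ∃ u u', T u v ≠ T u' v) (Finset.range (N * Lo)) := by
    intro k hk
    rw [Finset.mem_range] at hk
    rw [Finset.mem_filter, Finset.mem_range]
    constructor
    · calc c + 2 * Lo * k < 2 * Lo + 2 * Lo * k := by omega
        _ = 2 * Lo * (k + 1) := by ring
        _ ≤ 2 * Lo * M := Nat.mul_le_mul_left _ (by omega)
        _ = N * Lo := by rw [hM]; ring
    · have hmod : (c + 2 * Lo * k) % (2 * Lo) = c := by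
        rw [Nat.add_mul_mod_self_left]
        exact Nat.mod_eq_of_lt hclt
      exact ⟨u₁, u₂, by rw [hrow u₁ _ hmod, hrow u₂ _ hmod]; exact hne⟩
  have hinj : Set.InjOn (fun k => c + 2 * Lo * k) (Finset.range M) := by
    intro x _ y _ hxy
    simp only at hxy
    have h3 : 2 * Lo * x = 2 * Lo * y := by omega
    exact Nat.eq_of_mul_eq_mul_left (by omega) h3
  have h4 := Finset.card_le_card_of_injOn _ hmem hinj
  rw [Finset.card_range] at h4
  omega

end Aux

/-! ### fold lemmas -/

lemma fold_congr {L : ℕ} (v w : ℕ) (hvw : (v : ℤ) % (2 * L) = (w : ℤ) % (2 * L)) :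
    fold L v = fold L w := by
  unfold fold; rw [hvw]

lemma fold_mem (L : ℕ) (hL : 0 < L) (v : ℕ) : fold L v ∈ lamF L := by
  unfold fold lamF
  have h2L : (0:ℤ) < 2 * L := by positivity
  have h0 : 0 ≤ (v : ℤ) % (2 * L) := Int.emod_nonneg _ (by omega)
  have h1 : (v : ℤ) % (2 * L) < 2 * L := Int.emod_lt_of_pos _ h2L
  set m : ℤ := (v : ℤ) % (2 * L) with hm
  simp only [Finset.mem_Icc]
  have hL' : (1:ℤ) ≤ L := by exact_mod_cast hL
  split_ifs <;> omega

lemma fold_surj (L : ℕ) (hL : 0 < L) (r : ℤ) (hr : r ∈ lamF L) :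
    ∃ v : ℕ, v < 2 * L ∧ fold L v = r := by
  simp only [lamF, Finset.mem_Icc] at hr
  have hL' : (1:ℤ) ≤ L := by exact_mod_cast hL
  rcases le_or_gt 0 r with h0 | h0
  · refine ⟨r.toNat, by omega, ?_⟩
    have hc : (r.toNat : ℤ) = r := Int.toNat_of_nonneg h0
    unfold fold
    rw [hc, Int.emod_eq_of_lt h0 (by omega)]
    simp only []; split_ifs <;> omega
  · refine ⟨(r + 2 * L).toNat, by omega, ?_⟩
    have hc : ((r + 2 * L).toNat : ℤ) = r + 2 * L := Int.toNat_of_nonneg (by omega)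
    unfold fold
    rw [hc, Int.emod_eq_of_lt (by omega) (by omega)]
    simp only []; split_ifs <;> omega

lemma lamF_card (L : ℕ) (hL : 0 < L) : (lamF L).card = Bside L := by
  rw [lamF, Int.card_Icc, Bside]
  rcases Nat.even_or_odd L with he | ho
  · rw [if_pos he]
    obtain ⟨k, hk⟩ := he
    omega
  · rw [if_neg (Nat.not_even_iff_odd.mpr ho)]
    obtain ⟨k, hk⟩ := ho
    omega

lemma fold_mod_per (L n : ℕ) (hdvd : 2 * L ∣ n) (u : ℕ) :
    fold L ((u + 2 * L) % n) = fold L (u % n) := by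
  apply fold_congr
  have hdvd' : ((2 * L : ℕ) : ℤ) ∣ ((n : ℕ) : ℤ) := Int.natCast_dvd_natCast.mpr hdvd
  push_cast
  rw [Int.emod_emod_of_dvd _ (by exact_mod_cast hdvd'), Int.emod_emod_of_dvd _ (by exact_mod_cast hdvd')]
  have h1 : (u:ℤ) + 2*L = u + (2*(L:ℤ))*1 := by ring
  rw [h1, Int.add_mul_emod_self_left]

/-! ### propagate lemmas -/

lemma propagate_apply (L1 L2 N : ℕ) (hL1 : 0 < L1) (hL2 : 0 < L2)
    (σΛ : {x : ℤ × ℤ // x ∈ blockF L1 L2} → Bool) (u v : ℕ) :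
    propagate L1 L2 N σΛ ((u : ZMod (N * L1)), (v : ZMod (N * L2))) =
      σΛ ⟨(fold L1 (((u : ZMod (N * L1))).val), fold L2 (((v : ZMod (N * L2))).val)),
          Finset.mem_product.mpr ⟨fold_mem L1 hL1 _, fold_mem L2 hL2 _⟩⟩ := by
  unfold propagate
  rw [dif_pos]
  exact Finset.mem_product.mpr ⟨fold_mem L1 hL1 _, fold_mem L2 hL2 _⟩

/-! ### ham expansion -/

lemma sum_zmod {n : ℕ} [NeZero n] (f : ZMod n → ℝ) :
    ∑ t, f t = ∑ k ∈ Finset.range n, f (k : ZMod n) := by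
  refine Finset.sum_nbij' (i := fun (t : ZMod n) => t.val) (j := fun k => (k : ZMod n))
    ?_ ?_ ?_ ?_ ?_
  · intro t _; simp [ZMod.val_lt]
  · intro k hk; simp
  · intro t _; simp [ZMod.natCast_zmod_val]
  · intro k hk; simp only [Finset.mem_range] at hk; simp [ZMod.val_cast_of_lt hk]
  · intro t _; rw [ZMod.natCast_zmod_val]

lemma sum_torus {a b : ℕ} [NeZero a] [NeZero b] (f : ZMod a × ZMod b → ℝ) :
    ∑ t, f t = ∑ u ∈ Finset.range a, ∑ v ∈ Finset.range b, f ((u : ZMod a), (v : ZMod b)) := by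
  rw [Fintype.sum_prod_type]
  rw [sum_zmod (f := fun x => ∑ y, f (x, y))]
  exact Finset.sum_congr rfl fun u _ => sum_zmod _

lemma double_sum_flip (a b : ℕ) (W : ℕ → ℕ → ℝ) :
    ∑ u ∈ Finset.range a, ∑ v ∈ Finset.range b, W u v
      = (a : ℝ) * b - ∑ u ∈ Finset.range a, ∑ v ∈ Finset.range b, (1 - W u v) := by
  have h1 : ∑ u ∈ Finset.range a, ∑ v ∈ Finset.range b, (1 - W u v)
      = ∑ u ∈ Finset.range a, ((b : ℝ) - ∑ v ∈ Finset.range b, W u v) := by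
    refine Finset.sum_congr rfl fun u _ => ?_
    rw [Finset.sum_sub_distrib, Finset.sum_const, Finset.card_range, nsmul_eq_mul, mul_one]
  rw [h1, Finset.sum_sub_distrib, Finset.sum_const, Finset.card_range, nsmul_eq_mul]
  ring

lemma ham_expand {a b : ℕ} [NeZero a] [NeZero b] (J h : ℝ) (L1 L2 : ℕ)
    (σ : ZMod a × ZMod b → Bool) :
    ham J (cellField L1 L2 h) σ =
      -(2*J)*((a:ℝ)*b)
      + J * ∑ v ∈ Finset.range b, ∑ u ∈ Finset.range a,
          (1 - bval (fun u => σ ((u : ZMod a), (v : ZMod b))) u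
             * bval (fun u => σ ((u : ZMod a), (v : ZMod b))) (u+1))
      + J * ∑ u ∈ Finset.range a, ∑ v ∈ Finset.range b,
          (1 - bval (fun v => σ ((u : ZMod a), (v : ZMod b))) v
             * bval (fun v => σ ((u : ZMod a), (v : ZMod b))) (v+1))
      - ∑ v ∈ Finset.range b, ∑ u ∈ Finset.range a,
          psiv L1 L2 h u v * bval (fun u => σ ((u : ZMod a), (v : ZMod b))) u := by
  unfold ham
  rw [sum_torus (f := fun t => spin σ t * spin σ (t + (1, 0)) + spin σ t * spin σ (t + (0, 1)))]
  rw [sum_torus (f := fun t => cellField L1 L2 h t * spin σ t)]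
  have hsp : ∀ u v : ℕ, spin σ ((u : ZMod a), (v : ZMod b)) =
      bval (fun u => σ ((u : ZMod a), (v : ZMod b))) u := fun u v => rfl
  have hn1 : ∀ u v : ℕ, ((u : ZMod a), (v : ZMod b)) + (1, 0)
      = (((u+1 : ℕ) : ZMod a), (v : ZMod b)) := by
    intro u v
    rw [Prod.mk_add_mk, add_zero]
    push_cast
    rfl
  have hn2 : ∀ u v : ℕ, ((u : ZMod a), (v : ZMod b)) + (0, 1)
      = ((u : ZMod a), ((v+1 : ℕ) : ZMod b)) := by
    intro u v
    rw [Prod.mk_add_mk, add_zero]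
    push_cast
    rfl
  have hcf : ∀ u ∈ Finset.range a, ∀ v ∈ Finset.range b,
      cellField (a := a) (b := b) L1 L2 h ((u : ZMod a), (v : ZMod b)) = psiv L1 L2 h u v := by
    intro u hu v hv
    simp only [Finset.mem_range] at hu hv
    unfold cellField psiv
    rw [ZMod.val_cast_of_lt hu, ZMod.val_cast_of_lt hv]
  have e1 : ∑ u ∈ Finset.range a, ∑ v ∈ Finset.range b,
        (spin σ ((u : ZMod a), (v : ZMod b)) * spin σ (((u : ZMod a), (v : ZMod b)) + (1, 0))
         + spin σ ((u : ZMod a), (v : ZMod b)) * spin σ (((u : ZMod a), (v : ZMod b)) + (0, 1)))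
      = (∑ u ∈ Finset.range a, ∑ v ∈ Finset.range b,
          (bval (fun u => σ ((u : ZMod a), (v : ZMod b))) u
             * bval (fun u => σ ((u : ZMod a), (v : ZMod b))) (u+1)))
        + (∑ u ∈ Finset.range a, ∑ v ∈ Finset.range b,
          (bval (fun v => σ ((u : ZMod a), (v : ZMod b))) v
             * bval (fun v => σ ((u : ZMod a), (v : ZMod b))) (v+1))) := by
    rw [← Finset.sum_add_distrib]
    refine Finset.sum_congr rfl fun u _ => ?_
    rw [← Finset.sum_add_distrib]
    refine Finset.sum_congr rfl fun v _ => ?_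
    rw [hn1, hn2]
    simp only [spin, bval]
  rw [e1]
  rw [double_sum_flip a b (fun u v => bval (fun u => σ ((u : ZMod a), (v : ZMod b))) u
             * bval (fun u => σ ((u : ZMod a), (v : ZMod b))) (u+1))]
  rw [double_sum_flip a b (fun u v => bval (fun v => σ ((u : ZMod a), (v : ZMod b))) v
             * bval (fun v => σ ((u : ZMod a), (v : ZMod b))) (v+1))]
  rw [Finset.sum_comm (s := Finset.range a) (t := Finset.range b)
    (f := fun u v => (1 - bval (fun u => σ ((u : ZMod a), (v : ZMod b))) u
             * bval (fun u => σ ((u : ZMod a), (v : ZMod b))) (u+1)))]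
  have e2 : ∑ u ∈ Finset.range a, ∑ v ∈ Finset.range b,
        cellField (a := a) (b := b) L1 L2 h ((u : ZMod a), (v : ZMod b))
          * spin σ ((u : ZMod a), (v : ZMod b))
      = ∑ v ∈ Finset.range b, ∑ u ∈ Finset.range a,
          psiv L1 L2 h u v * bval (fun u => σ ((u : ZMod a), (v : ZMod b))) u := by
    rw [Finset.sum_comm]
    exact Finset.sum_congr rfl fun v hv => Finset.sum_congr rfl fun u hu => by
      rw [hcf u hu v hv, hsp u v]
  rw [e2]
  ring

/-! ### energy bound -/

lemma ham_true (L1 L2 N : ℕ) (hL1 : 0 < L1) (hNe : Even N)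
    [NeZero (N * L1)] [NeZero (N * L2)] (J h : ℝ) :
    ham (a := N * L1) (b := N * L2) J (cellField L1 L2 h) (fun _ => true) =
      -(2*J)*(((N*L1 : ℕ):ℝ)*((N*L2 : ℕ):ℝ)) := by
  rw [ham_expand J h L1 L2 (fun _ => true)]
  have hb : ∀ n : ℕ, bval (fun _ => (fun _ => true) ((n : ZMod (N*L1)), (0 : ZMod (N*L2)))) n = 1 := by
    intro n; rfl
  have h1 : ∀ (c : ℕ) (F : ℕ → Bool), (∀ x, F x = true) →
      ∀ s : Finset ℕ, ∑ n ∈ s, (1 - bval F n * bval F (n+1)) = 0 := by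
    intro c F hF s
    have : ∀ n, bval F n = 1 := fun n => by unfold bval; rw [hF n]; simp
    refine Finset.sum_eq_zero fun n _ => by rw [this n, this (n+1)]; ring
  have h2 : ∑ v ∈ Finset.range (N*L2), ∑ u ∈ Finset.range (N*L1),
      (1 - bval (fun u => true) u * bval (fun u => true) (u+1)) = 0 :=
    Finset.sum_eq_zero fun v _ => h1 0 _ (fun _ => rfl) _
  have h3 : ∑ u ∈ Finset.range (N*L1), ∑ v ∈ Finset.range (N*L2),
      (1 - bval (fun v => true) v * bval (fun v => true) (v+1)) = 0 :=
    Finset.sum_eq_zero fun v _ => h1 0 _ (fun _ => rfl) _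
  have h4 : ∑ v ∈ Finset.range (N*L2), ∑ u ∈ Finset.range (N*L1),
      psiv L1 L2 h u v * bval (fun u => true) u = 0 := by
    refine Finset.sum_eq_zero fun v _ => ?_
    have : ∀ u, psiv L1 L2 h u v * bval (fun u => true) u = psiv L1 L2 h u v := by
      intro u; unfold bval; simp
    rw [Finset.sum_congr rfl (fun u _ => this u), field_row_zero L1 L2 N hL1 hNe h v]
  rw [h2, h3, h4]
  ring

set_option maxHeartbeats 1000000 in
lemma energy_bound (L1 L2 N : ℕ) (hL1 : 0 < L1) (hL2 : 0 < L2) (hN : 2 ≤ N) (hNe : Even N)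
    [NeZero (N * L1)] [NeZero (N * L2)] (J h : ℝ) (hJ : 0 < J) (hh : 0 < h)
    (hcond : h < 2 * J / (L1 : ℝ) + 2 * J / (L2 : ℝ))
    (σΛ : {x : ℤ × ℤ // x ∈ blockF L1 L2} → Bool) (hnc : ∃ x y, σΛ x ≠ σΛ y) :
    -(2*J)*(((N*L1 : ℕ):ℝ)*((N*L2 : ℕ):ℝ))
        + (N:ℝ)^2 * (2*J - h * (L1:ℝ) * (L2:ℝ) / ((L1:ℝ) + (L2:ℝ)))
      ≤ ham J (cellField L1 L2 h) (propagate L1 L2 N σΛ) := by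
  classical
  obtain ⟨M, hM⟩ := hNe
  have hNe' : Even N := ⟨M, hM⟩
  have hdvd1 : 2 * L1 ∣ N * L1 := ⟨M, by rw [hM]; ring⟩
  have hdvd2 : 2 * L2 ∣ N * L2 := ⟨M, by rw [hM]; ring⟩
  set σ : ZMod (N*L1) × ZMod (N*L2) → Bool := propagate L1 L2 N σΛ with hσ
  set T : ℕ → ℕ → Bool := fun u v => σ ((u : ZMod (N*L1)), (v : ZMod (N*L2))) with hT
  -- periodicity
  have hTeq : ∀ u v : ℕ, T u v =
      σΛ ⟨(fold L1 (u % (N*L1)), fold L2 (v % (N*L2))),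
        Finset.mem_product.mpr ⟨fold_mem L1 hL1 _, fold_mem L2 hL2 _⟩⟩ := by
    intro u v
    rw [hT]
    simp only []
    rw [hσ, propagate_apply L1 L2 N hL1 hL2 σΛ u v]
    congr 1
    apply Subtype.ext
    simp only [ZMod.val_natCast]
  have hTper1 : ∀ u v : ℕ, T (u + 2*L1) v = T u v := by
    intro u v
    rw [hTeq, hTeq]
    congr 1
    apply Subtype.ext
    simp only [Prod.mk.injEq]
    exact ⟨fold_mod_per L1 (N*L1) hdvd1 u, trivial⟩
  have hTper2 : ∀ u v : ℕ, T u (v + 2*L2) = T u v := by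
    intro u v
    rw [hTeq, hTeq]
    congr 1
    apply Subtype.ext
    simp only [Prod.mk.injEq]
    exact ⟨trivial, fold_mod_per L2 (N*L2) hdvd2 v⟩
  -- grid nonconstancy
  have hgrid : ∃ u1 v1 u2 v2 : ℕ, T u1 v1 ≠ T u2 v2 := by
    obtain ⟨x, y, hxy⟩ := hnc
    obtain ⟨hx1, hx2⟩ := Finset.mem_product.mp x.2
    obtain ⟨hy1, hy2⟩ := Finset.mem_product.mp y.2
    obtain ⟨u1, hu1lt, hu1⟩ := fold_surj L1 hL1 _ hx1
    obtain ⟨v1, hv1lt, hv1⟩ := fold_surj L2 hL2 _ hx2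
    obtain ⟨u2, hu2lt, hu2⟩ := fold_surj L1 hL1 _ hy1
    obtain ⟨v2, hv2lt, hv2⟩ := fold_surj L2 hL2 _ hy2
    have hlt : ∀ w : ℕ, w < 2*L1 → w % (N*L1) = w := fun w hw =>
      Nat.mod_eq_of_lt (lt_of_lt_of_le hw (by nlinarith))
    have hlt2 : ∀ w : ℕ, w < 2*L2 → w % (N*L2) = w := fun w hw =>
      Nat.mod_eq_of_lt (lt_of_lt_of_le hw (by nlinarith))
    refine ⟨u1, v1, u2, v2, ?_⟩
    rw [hTeq, hTeq]
    have e1 : (⟨(fold L1 (u1 % (N*L1)), fold L2 (v1 % (N*L2))),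
        Finset.mem_product.mpr ⟨fold_mem L1 hL1 _, fold_mem L2 hL2 _⟩⟩ :
        {x : ℤ × ℤ // x ∈ blockF L1 L2}) = x := by
      apply Subtype.ext
      rw [hlt u1 hu1lt, hlt2 v1 hv1lt]
      exact Prod.ext hu1 hv1
    have e2 : (⟨(fold L1 (u2 % (N*L1)), fold L2 (v2 % (N*L2))),
        Finset.mem_product.mpr ⟨fold_mem L1 hL1 _, fold_mem L2 hL2 _⟩⟩ :
        {x : ℤ × ℤ // x ∈ blockF L1 L2}) = y := by
      apply Subtype.ext
      rw [hlt u2 hu2lt, hlt2 v2 hv2lt]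
      exact Prod.ext hu2 hv2
    rw [e1, e2]
    exact hxy
  -- counts
  set A : ℕ := ncCount (N*L2) T with hA
  set B : ℕ := ncCount (N*L1) (fun u v => T v u) with hB
  have hS1 := dir_bond L1 L2 N T hL1 hNe' hTper1
  have hS2 := dir_bond L2 L1 N (fun u v => T v u) hL2 hNe' (fun u v => hTper2 v u)
  have hF1 := dir_field L1 L2 N T h hL1 hNe' hh.le
  have hF2 := dir_field L2 L1 N (fun u v => T v u) h hL2 hNe' hh.le
  -- count lower bound
  have hABn : N ≤ A + B := by
    by_cases hA0 : A = 0
    · -- all rows (fixed v) are constant in u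
      have hrowc : ∀ u u' v : ℕ, T u v = T u' v := by
        intro u u' v
        have hvlt : v % (2*L2) < N*L2 :=
          lt_of_lt_of_le (Nat.mod_lt _ (by omega)) (by nlinarith)
        have hvm : ∀ w : ℕ, T w v = T w (v % (2*L2)) := fun w =>
          per_mod (fun n => T w n) (2*L2) (by omega) (fun n => hTper2 w n) v
        by_contra hne
        have hmem : v % (2*L2) ∈ @Finset.filter _ (fun v => ∃ u u', T u v ≠ T u' v)
            (Classical.decPred _) (Finset.range (N*L2)) := by
          rw [Finset.mem_filter]
          exact ⟨Finset.mem_range.mpr hvlt, u, u', by rw [← hvm u, ← hvm u']; exact hne⟩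
        have : 0 < A := by
          rw [hA]; unfold ncCount
          exact Finset.card_pos.mpr ⟨_, hmem⟩
        omega
      obtain ⟨u1, v1, u2, v2, hne⟩ := hgrid
      have hcolnc : ∀ u : ℕ, T u v1 ≠ T u v2 := by
        intro u
        have e1 : T u v1 = T u1 v1 := hrowc u u1 v1
        have e2 : T u v2 = T u2 v2 := hrowc u u2 v2
        rw [e1, e2]
        exact hne
      have hBfull : B = N*L1 := by
        rw [hB]; unfold ncCount
        rw [Finset.filter_true_of_mem, Finset.card_range]
        intro x _
        exact ⟨v1, v2, hcolnc x⟩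
      have : N ≤ N * L1 := Nat.le_mul_of_pos_right N hL1
      omega
    · by_cases hB0 : B = 0
      · have hcolc : ∀ v v' u : ℕ, T u v = T u v' := by
          intro v v' u
          have hult : u % (2*L1) < N*L1 :=
            lt_of_lt_of_le (Nat.mod_lt _ (by omega)) (by nlinarith)
          have hum : ∀ w : ℕ, T u w = T (u % (2*L1)) w := fun w =>
            per_mod (fun n => T n w) (2*L1) (by omega) (fun n => hTper1 n w) u
          by_contra hne
          have hmem : u % (2*L1) ∈ @Finset.filter _
              (fun x => ∃ w w', (fun u v => T v u) w x ≠ (fun u v => T v u) w' x)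
              (Classical.decPred _) (Finset.range (N*L1)) := by
            rw [Finset.mem_filter]
            refine ⟨Finset.mem_range.mpr hult, v, v', ?_⟩
            simp only []
            rw [← hum v, ← hum v']
            exact hne
          have : 0 < B := by
            rw [hB]; unfold ncCount
            exact Finset.card_pos.mpr ⟨_, hmem⟩
          omega
        obtain ⟨u1, v1, u2, v2, hne⟩ := hgrid
        have hrownc : ∀ v : ℕ, T u1 v ≠ T u2 v := by
          intro v
          have e1 : T u1 v = T u1 v1 := hcolc v v1 u1
          have e2 : T u2 v = T u2 v2 := hcolc v v2 u2
          rw [e1, e2]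
          exact hne
        have hAfull : A = N*L2 := by
          rw [hA]; unfold ncCount
          rw [Finset.filter_true_of_mem, Finset.card_range]
          intro x _
          exact ⟨u1, u2, hrownc x⟩
        have : N ≤ N * L2 := Nat.le_mul_of_pos_right N hL2
        omega
      · have hga : N / 2 ≤ A :=
          dir_count_ge L1 L2 N T hL2 hNe' hTper2 (by omega)
        have hgb : N / 2 ≤ B :=
          dir_count_ge L2 L1 N (fun u v => T v u) hL1 hNe'
            (fun u v => hTper1 v u) (by omega)
        omega
  -- swap identity for the field
  have hswap : ∑ v ∈ Finset.range (N*L1), ∑ u ∈ Finset.range (N*L2),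
        psiv L2 L1 h u v * bval (fun u => T v u) u
      = ∑ v ∈ Finset.range (N*L2), ∑ u ∈ Finset.range (N*L1),
        psiv L1 L2 h u v * bval (fun u => T u v) u := by
    rw [Finset.sum_comm]
    refine Finset.sum_congr rfl fun x _ => Finset.sum_congr rfl fun y _ => ?_
    rw [psiv_swap L2 L1 h x y]
    simp only [bval]
  rw [hswap] at hF2
  -- final arithmetic
  rw [ham_expand J h L1 L2 σ]
  have hL1R : (0:ℝ) < L1 := by exact_mod_cast hL1
  have hL2R : (0:ℝ) < L2 := by exact_mod_cast hL2
  have hNR : (0:ℝ) < N := by exact_mod_cast (by omega : 0 < N)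
  have hL12 : (0:ℝ) < (L1:ℝ) + L2 := by linarith
  have hcond' : h * L1 * L2 < 2*J*((L1:ℝ)+L2) := by
    have e : (2*J/(L1:ℝ) + 2*J/(L2:ℝ))*((L1:ℝ)*L2) = 2*J*((L1:ℝ)+L2) := by
      field_simp; ring
    nlinarith [mul_lt_mul_of_pos_right hcond (by positivity : (0:ℝ) < (L1:ℝ)*L2)]
  have hc : 0 ≤ 2*J - h * (L1:ℝ) * (L2:ℝ) / ((L1:ℝ) + (L2:ℝ)) := by
    rw [sub_nonneg, div_le_iff₀ hL12]
    nlinarith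
  have hABR : (N:ℝ) ≤ (A:ℝ) + (B:ℝ) := by
    have : ((N:ℕ):ℝ) ≤ ((A + B : ℕ):ℝ) := Nat.cast_le.mpr hABn
    push_cast at this
    linarith
  set S1 := ∑ v ∈ Finset.range (N*L2), ∑ u ∈ Finset.range (N*L1),
      (1 - bval (fun u => σ ((u : ZMod (N*L1)), (v : ZMod (N*L2)))) u
         * bval (fun u => σ ((u : ZMod (N*L1)), (v : ZMod (N*L2)))) (u+1)) with hS1d
  set S2 := ∑ u ∈ Finset.range (N*L1), ∑ v ∈ Finset.range (N*L2),
      (1 - bval (fun v => σ ((u : ZMod (N*L1)), (v : ZMod (N*L2)))) v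
         * bval (fun v => σ ((u : ZMod (N*L1)), (v : ZMod (N*L2)))) (v+1)) with hS2d
  set F0 := ∑ v ∈ Finset.range (N*L2), ∑ u ∈ Finset.range (N*L1),
      psiv L1 L2 h u v * bval (fun u => σ ((u : ZMod (N*L1)), (v : ZMod (N*L2)))) u with hF0d
  have hS1' : 2 * (N:ℝ) * (A:ℝ) ≤ S1 := hS1
  have hS2' : 2 * (N:ℝ) * (B:ℝ) ≤ S2 := hS2
  have hF1' : F0 ≤ h * ((N:ℝ) * L1) * (A:ℝ) := by
    have := hF1
    push_cast at this ⊢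
    exact this
  have hF2' : F0 ≤ h * ((N:ℝ) * L2) * (B:ℝ) := by
    have := hF2
    push_cast at this ⊢
    exact this
  have hAnn : (0:ℝ) ≤ A := Nat.cast_nonneg A
  have hBnn : (0:ℝ) ≤ B := Nat.cast_nonneg B
  have hFdiv : F0 ≤ h * (N:ℝ) * L1 * L2 * ((A:ℝ)+(B:ℝ)) / ((L1:ℝ)+L2) := by
    rw [le_div_iff₀ hL12]
    nlinarith [mul_le_mul_of_nonneg_right hF1' hL2R.le,
      mul_le_mul_of_nonneg_right hF2' hL1R.le]
  have key1 : (N:ℝ)^2 * (2*J - h * (L1:ℝ) * (L2:ℝ) / ((L1:ℝ) + (L2:ℝ)))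
      ≤ (N:ℝ)*((A:ℝ)+(B:ℝ)) * (2*J - h * (L1:ℝ) * (L2:ℝ) / ((L1:ℝ) + (L2:ℝ))) := by
    apply mul_le_mul_of_nonneg_right _ hc
    nlinarith
  have key2 : (N:ℝ)*((A:ℝ)+(B:ℝ)) * (2*J - h * (L1:ℝ) * (L2:ℝ) / ((L1:ℝ) + (L2:ℝ)))
      = 2*J*(N:ℝ)*((A:ℝ)+(B:ℝ)) - h * (N:ℝ) * L1 * L2 * ((A:ℝ)+(B:ℝ)) / ((L1:ℝ)+L2) := by
    field_simp
  have key3 : 2*J*(N:ℝ)*((A:ℝ)+(B:ℝ)) ≤ J * S1 + J * S2 := by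
    nlinarith [mul_le_mul_of_nonneg_left hS1' hJ.le, mul_le_mul_of_nonneg_left hS2' hJ.le]
  linarith [key1, key2.le, key2.ge, key3, hFdiv]

set_option maxHeartbeats 1000000 in
/-- inequality (4.28): if `h < 2J/L₁ + 2J/L₂` then, with `R(Λ)` the
set of non-constant block configurations on `Λ`,
`( Σ_{σ_Λ ∈ R(Λ)} e^{−βH_N(σ_{Λ,N})} / Z_N(β) )^{1/N²}
   ≤ 2^{B₁B₂} · exp(−β·(2J − h·L₁L₂/(L₁+L₂)))`. -/
theorem bad_block_bound (L1 L2 N : ℕ) (hL1 : 0 < L1) (hL2 : 0 < L2)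
    (hN : 2 ≤ N) (hNeven : Even N) [NeZero (N * L1)] [NeZero (N * L2)]
    (J h β : ℝ) (hJ : 0 < J) (hh : 0 < h) (hβ : 0 ≤ β)
    (hcond : h < 2 * J / (L1 : ℝ) + 2 * J / (L2 : ℝ)) :
    ((∑ σΛ ∈ Finset.univ.filter
          (fun σΛ : {x : ℤ × ℤ // x ∈ blockF L1 L2} → Bool => ∃ u v, σΛ u ≠ σΛ v),
        Real.exp (-β * ham J (cellField L1 L2 h) (propagate L1 L2 N σΛ)))
      / Zfun (a := N * L1) (b := N * L2) β J (cellField L1 L2 h)) ^ (1 / (N : ℝ) ^ 2)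
    ≤ 2 ^ (Bside L1 * Bside L2) *
        Real.exp (-β * (2 * J - h * (L1 : ℝ) * (L2 : ℝ) / ((L1 : ℝ) + (L2 : ℝ)))) := by
  classical
  set c : ℝ := 2 * J - h * (L1 : ℝ) * (L2 : ℝ) / ((L1 : ℝ) + (L2 : ℝ)) with hc
  set Hp : ℝ := -(2*J)*(((N*L1 : ℕ):ℝ)*((N*L2 : ℕ):ℝ)) with hHp
  set K : ℕ := Bside L1 * Bside L2 with hK
  set R : Finset ({x : ℤ × ℤ // x ∈ blockF L1 L2} → Bool) :=
    Finset.univ.filter (fun σΛ => ∃ u v, σΛ u ≠ σΛ v) with hR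
  have hZpos : 0 < Zfun (a := N*L1) (b := N*L2) β J (cellField L1 L2 h) := by
    unfold Zfun
    exact Finset.sum_pos (fun i _ => Real.exp_pos _) Finset.univ_nonempty
  have hZlb : Real.exp (-β * Hp) ≤ Zfun (a := N*L1) (b := N*L2) β J (cellField L1 L2 h) := by
    have h1 : Real.exp (-β * ham J (cellField L1 L2 h) (fun _ => true)) ≤
        Zfun (a := N*L1) (b := N*L2) β J (cellField L1 L2 h) :=
      Finset.single_le_sum
        (f := fun σ' : ZMod (N*L1) × ZMod (N*L2) → Bool =>
          Real.exp (-β * ham J (cellField L1 L2 h) σ'))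
        (fun i _ => (Real.exp_pos _).le) (Finset.mem_univ (fun _ => true))
    rw [ham_true L1 L2 N hL1 hNeven J h] at h1
    exact h1
  have hNumB : ∀ σΛ ∈ R, Real.exp (-β * ham J (cellField L1 L2 h) (propagate L1 L2 N σΛ))
      ≤ Real.exp (-β * (Hp + (N:ℝ)^2 * c)) := by
    intro σΛ hmem
    rw [hR, Finset.mem_filter] at hmem
    have hE := energy_bound L1 L2 N hL1 hL2 hN hNeven J h hJ hh hcond σΛ hmem.2
    apply Real.exp_le_exp.mpr
    have h2 := mul_le_mul_of_nonneg_left hE hβ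
    rw [hHp, hc]
    nlinarith [h2]
  have hNum : ∑ σΛ ∈ R, Real.exp (-β * ham J (cellField L1 L2 h) (propagate L1 L2 N σΛ))
      ≤ (R.card : ℝ) * Real.exp (-β * (Hp + (N:ℝ)^2 * c)) := by
    have h3 := Finset.sum_le_card_nsmul R _ _ hNumB
    rwa [nsmul_eq_mul] at h3
  have hcard : (R.card : ℝ) ≤ 2^K := by
    have h1 : R.card ≤ Finset.univ.card
        (α := {x : ℤ × ℤ // x ∈ blockF L1 L2} → Bool) := Finset.card_le_univ R
    have h2 : Finset.univ.card (α := {x : ℤ × ℤ // x ∈ blockF L1 L2} → Bool) = 2 ^ K := by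
      rw [Finset.card_univ, Fintype.card_fun, Fintype.card_bool, Fintype.card_coe,
        hK, blockF, Finset.card_product, lamF_card L1 hL1, lamF_card L2 hL2]
    have h4 : R.card ≤ 2 ^ K := h2 ▸ h1
    calc (R.card : ℝ) ≤ ((2^K : ℕ) : ℝ) := Nat.cast_le.mpr h4
      _ = 2^K := by push_cast; ring
  have hratio : (∑ σΛ ∈ R, Real.exp (-β * ham J (cellField L1 L2 h) (propagate L1 L2 N σΛ)))
      / Zfun (a := N*L1) (b := N*L2) β J (cellField L1 L2 h)
      ≤ (2:ℝ)^K * Real.exp (-β * ((N:ℝ)^2 * c)) := by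
    have hd := div_le_div₀ (by positivity) hNum (Real.exp_pos (-β * Hp)) hZlb
    have he : (R.card : ℝ) * Real.exp (-β * (Hp + (N:ℝ)^2 * c)) / Real.exp (-β * Hp)
        = (R.card : ℝ) * Real.exp (-β * ((N:ℝ)^2 * c)) := by
      rw [mul_div_assoc, ← Real.exp_sub]
      congr 1
      ring
    rw [he] at hd
    calc _ ≤ (R.card : ℝ) * Real.exp (-β * ((N:ℝ)^2 * c)) := hd
      _ ≤ (2:ℝ)^K * Real.exp (-β * ((N:ℝ)^2 * c)) :=
          mul_le_mul_of_nonneg_right hcard (Real.exp_pos _).le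
  have h0 : 0 ≤ (∑ σΛ ∈ R, Real.exp (-β * ham J (cellField L1 L2 h) (propagate L1 L2 N σΛ)))
      / Zfun (a := N*L1) (b := N*L2) β J (cellField L1 L2 h) :=
    div_nonneg (Finset.sum_nonneg fun i _ => (Real.exp_pos _).le) hZpos.le
  have hNR : (0:ℝ) < N := by exact_mod_cast (by omega : 0 < N)
  have hN2 : (1:ℝ) ≤ (N:ℝ)^2 := by nlinarith [show (2:ℝ) ≤ N by exact_mod_cast hN]
  have he0 : (0:ℝ) ≤ 1 / (N:ℝ)^2 := by positivity
  have he1 : 1 / (N:ℝ)^2 ≤ 1 := by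
    rw [div_le_one (by positivity)]
    exact hN2
  have h2powK : (1:ℝ) ≤ 2^K := one_le_pow₀ (by norm_num)
  calc ((∑ σΛ ∈ R, Real.exp (-β * ham J (cellField L1 L2 h) (propagate L1 L2 N σΛ)))
      / Zfun (a := N*L1) (b := N*L2) β J (cellField L1 L2 h)) ^ (1 / (N : ℝ) ^ 2)
      ≤ ((2:ℝ)^K * Real.exp (-β * ((N:ℝ)^2 * c))) ^ (1 / (N : ℝ) ^ 2) :=
        Real.rpow_le_rpow h0 hratio he0
    _ = ((2:ℝ)^K) ^ (1 / (N : ℝ) ^ 2) *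
          (Real.exp (-β * ((N:ℝ)^2 * c))) ^ (1 / (N : ℝ) ^ 2) :=
        Real.mul_rpow (by positivity) (Real.exp_pos _).le
    _ = ((2:ℝ)^K) ^ (1 / (N : ℝ) ^ 2) * Real.exp (-β * c) := by
        rw [Real.rpow_def_of_pos (Real.exp_pos _), Real.log_exp]
        congr 1
        field_simp
    _ ≤ (2:ℝ)^K * Real.exp (-β * c) := by
        apply mul_le_mul_of_nonneg_right _ (Real.exp_pos _).le
        calc ((2:ℝ)^K) ^ (1 / (N : ℝ) ^ 2) ≤ ((2:ℝ)^K) ^ (1:ℝ) :=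
              Real.rpow_le_rpow_of_exponent_le h2powK he1
          _ = (2:ℝ)^K := Real.rpow_one _
end

section
/- (Peierls bound on the fundamental torus for the alternating-strips model.) Let L be a positive integer, J > 0, h > 0 with h < 2J/L. On the torus 𝕋* = (ℤ/2ℤ) × (ℤ/2Lℤ) with the alternating-strips field, every non-constant configuration σ ∈ {−1,+1}^{𝕋*} satisfies H_*(σ) − H_*(σ⁺) ≥ 4·(2J − hL), where σ⁺ ≡ +1. -/
/-- The alternating-strips external field on a torus `(ℤ/aℤ) × (ℤ/bℤ)`, via canonical
representatives: `+h` if `⌊t₂/L⌋` is even and `−h` otherwise. -/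
noncomputable def stripsFieldT {a b : ℕ} (L : ℕ) (h : ℝ) (t : ZMod a × ZMod b) : ℝ :=
  if Even (t.2.val / L) then h else -h

/-! ### Auxiliary material for the Peierls bound -/

/-- The ±1 value of a Boolean. -/
noncomputable def sg (b : Bool) : ℝ := if b then 1 else -1

lemma sum_zmod_two {M : Type*} [AddCommMonoid M] (g : ZMod 2 → M) :
    ∑ x : ZMod 2, g x = g 0 + g 1 := by
  have h : (Finset.univ : Finset (ZMod 2)) = {0, 1} := by decide
  rw [h, Finset.sum_insert (by decide), Finset.sum_singleton]

/-- A non-constant function on a cyclic group has a "change point". -/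
lemma cycle_one_change {n : ℕ} [NeZero n] (f : ZMod n → Bool) (x y : ZMod n)
    (hxy : f x ≠ f y) : ∃ c, f c ≠ f (c + 1) := by
  by_contra hc
  push_neg at hc
  have key : ∀ k : ℕ, f (x + (k : ZMod n)) = f x := by
    intro k
    induction k with
    | zero => simp
    | succ m ih =>
      have : x + ((m + 1 : ℕ) : ZMod n) = (x + (m : ZMod n)) + 1 := by push_cast; ring
      rw [this, ← hc (x + (m : ZMod n)), ih]
  have := key ((y - x).val)
  rw [ZMod.natCast_rightInverse (y - x)] at this
  simp at this
  exact hxy this.symm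

/-- A non-constant function on a cyclic group has at least two "change points". -/
lemma cycle_two_changes {n : ℕ} [NeZero n] (f : ZMod n → Bool) (x y : ZMod n)
    (hxy : f x ≠ f y) :
    ∃ c d : ZMod n, c ≠ d ∧ f c ≠ f (c + 1) ∧ f d ≠ f (d + 1) := by
  obtain ⟨c, hc⟩ := cycle_one_change f x y hxy
  by_contra hd
  push_neg at hd
  have hall : ∀ d : ZMod n, d ≠ c → f d = f (d + 1) := by
    intro d hdc
    exact hd c d (Ne.symm hdc) hc
  have npos : 0 < n := Nat.pos_of_ne_zero (NeZero.ne n)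
  have key : ∀ k : ℕ, k < n → f (c + 1 + (k : ZMod n)) = f (c + 1) := by
    intro k hk
    induction k with
    | zero => simp
    | succ m ih =>
      have hne : c + 1 + (m : ZMod n) ≠ c := by
        intro hEq
        have h0 : ((m + 1 : ℕ) : ZMod n) = 0 := by
          have := congrArg (fun z => z - c) hEq
          simp at this
          push_cast
          linear_combination this
        rw [ZMod.natCast_eq_zero_iff] at h0
        have := Nat.le_of_dvd (Nat.succ_pos m) h0
        omega
      have step : f (c + 1 + ((m + 1 : ℕ) : ZMod n)) = f (c + 1 + (m : ZMod n)) := by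
        have : c + 1 + ((m + 1 : ℕ) : ZMod n) = (c + 1 + (m : ZMod n)) + 1 := by
          push_cast; ring
        rw [this, ← hall _ hne]
      rw [step, ih (by omega)]
  have hlast := key (n - 1) (by omega)
  have hcn : c + 1 + ((n - 1 : ℕ) : ZMod n) = c := by
    have hz : ((n : ℕ) : ZMod n) = 0 := ZMod.natCast_self n
    have h2 : ((n - 1 : ℕ) : ZMod n) + 1 = ((n : ℕ) : ZMod n) := by
      rw [← Nat.cast_add_one]
      congr 1
      omega
    have : ((n - 1 : ℕ) : ZMod n) = -1 := by linear_combination h2 + hz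
    rw [this]; ring
  rw [hcn] at hlast
  exact hc hlast

/-- Master pointwise row bound. -/
lemma row_bound (J h : ℝ) (hJ : 0 < J) (hh : 0 < h) (a b a' b' : Bool) (ε : ℝ)
    (hε : ε = h ∨ ε = -h) :
    J * (4 - (sg a * sg b + sg a * sg a' + sg b * sg a + sg b * sg b')) - ε * (sg a + sg b)
    ≥ (if a = b then -(2 * h) else 4 * J) + (if ((a = b) ↔ (a' = b')) then 0 else 2 * J) := by
  rcases hε with rfl | rfl <;> cases a <;> cases b <;> cases a' <;> cases b' <;>
    simp [sg] <;> nlinarith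

/-- Pointwise row bound for everywhere-uniform rows. -/
lemma row_bound2 (J h : ℝ) (hh : 0 < h) (a b a' b' : Bool) (ε : ℝ)
    (hε : ε = h ∨ ε = -h) (hab : a = b) (hab' : a' = b') :
    J * (4 - (sg a * sg b + sg a * sg a' + sg b * sg a + sg b * sg b')) - ε * (sg a + sg b)
    ≥ -(2 * h) + (if a = a' then 0 else 4 * J) := by
  subst hab hab'
  rcases hε with rfl | rfl <;> cases a <;> cases a' <;> simp [sg] <;> nlinarith

/-- The strips field sums to zero over a column of the fundamental torus. -/
lemma strips_sum_zero (L : ℕ) (hL : 0 < L) [NeZero (2 * L)] (h : ℝ) :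
    ∑ y : ZMod (2 * L), (if Even (y.val / L) then h else -h) = 0 := by
  have hb : ∑ y : ZMod (2 * L), (if Even (y.val / L) then h else -h)
      = ∑ i ∈ Finset.range (2 * L), (if Even (i / L) then h else -h) := by
    refine Finset.sum_nbij' (fun y => y.val) (fun i => (i : ZMod (2 * L))) ?_ ?_ ?_ ?_ ?_
    · intro y _; exact Finset.mem_range.mpr (ZMod.val_lt y)
    · intro i _; exact Finset.mem_univ _
    · intro y _; exact (ZMod.natCast_rightInverse y)
    · intro i hi; exact ZMod.val_cast_of_lt (Finset.mem_range.mp hi)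
    · intro y _; rfl
  rw [hb]
  rw [Finset.range_eq_Ico, ← Finset.sum_Ico_consecutive _ (Nat.zero_le L) (by omega)]
  have e1 : ∀ i ∈ Finset.Ico 0 L, (if Even (i / L) then h else -h) = h := by
    intro i hi
    simp only [Finset.mem_Ico] at hi
    rw [Nat.div_eq_of_lt hi.2]
    simp
  have e2 : ∀ i ∈ Finset.Ico L (2 * L), (if Even (i / L) then h else -h) = -h := by
    intro i hi
    simp only [Finset.mem_Ico] at hi
    have hd : i / L = 1 := by
      apply Nat.div_eq_of_lt_le <;> omega
    rw [hd]
    simp [Nat.not_even_one]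
  rw [Finset.sum_congr rfl e1, Finset.sum_congr rfl e2, Finset.sum_const, Finset.sum_const,
    Nat.card_Ico, Nat.card_Ico, nsmul_eq_mul, nsmul_eq_mul]
  rw [show 2 * L - L = L by omega]
  rw [Nat.sub_zero]
  ring

/-- The Hamiltonian on the fundamental torus as a sum over rows. -/
lemma ham_row {n : ℕ} [NeZero n] (J : ℝ) (hf : ZMod 2 × ZMod n → ℝ)
    (σ : ZMod 2 × ZMod n → Bool) :
    ham J hf σ = ∑ y : ZMod n,
      (-J * (spin σ (0, y) * spin σ (1, y) + spin σ (0, y) * spin σ (0, y + 1)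
        + spin σ (1, y) * spin σ (0, y) + spin σ (1, y) * spin σ (1, y + 1))
       - (hf (0, y) * spin σ (0, y) + hf (1, y) * spin σ (1, y))) := by
  have e1 : ∀ y : ZMod n, ((0 : ZMod 2), y) + ((1 : ZMod 2), (0 : ZMod n)) = (1, y) := by
    intro y; rw [Prod.mk_add_mk]; norm_num
  have e2 : ∀ y : ZMod n, ((1 : ZMod 2), y) + ((1 : ZMod 2), (0 : ZMod n)) = (0, y) := by
    intro y; rw [Prod.mk_add_mk]
    have : (1 : ZMod 2) + 1 = 0 := by decide
    rw [this, add_zero]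
  have e3 : ∀ (x : ZMod 2) (y : ZMod n), (x, y) + ((0 : ZMod 2), (1 : ZMod n)) = (x, y + 1) := by
    intro x y; rw [Prod.mk_add_mk, add_zero]
  unfold ham
  rw [Fintype.sum_prod_type, Fintype.sum_prod_type, sum_zmod_two (fun x => ∑ y, _),
    sum_zmod_two (fun x => ∑ y, _)]
  rw [← Finset.sum_add_distrib, ← Finset.sum_add_distrib, Finset.mul_sum,
    ← Finset.sum_sub_distrib]
  refine Finset.sum_congr rfl fun y _ => ?_
  rw [e1 y, e2 y, e3 0 y, e3 1 y]
  ring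

/-- Peierls bound on the fundamental torus, strips model: if
`h < 2J/L`, every non-constant configuration `σ` on `𝕋* = (ℤ/2ℤ) × (ℤ/2Lℤ)` with the
alternating-strips field satisfies `H_*(σ) − H_*(σ⁺) ≥ 4·(2J − hL)`, where `σ⁺ ≡ +1`. -/
theorem peierls_bound_fundamental_torus_strips (L : ℕ) (hL : 0 < L) [NeZero (2 * L)]
    (J h : ℝ) (hJ : 0 < J) (hh : 0 < h) (hcond : h < 2 * J / (L : ℝ))
    (σ : ZMod 2 × ZMod (2 * L) → Bool) (hσ : ∃ t u, σ t ≠ σ u) :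
    ham J (stripsFieldT L h) σ
        - ham J (stripsFieldT L h) (fun _ : ZMod 2 × ZMod (2 * L) => true)
      ≥ 4 * (2 * J - h * (L : ℝ)) := by
  classical
  set ε : ZMod (2 * L) → ℝ := fun y => if Even (y.val / L) then h else -h with hε
  have hεval : ∀ y : ZMod (2 * L), ε y = h ∨ ε y = -h := by
    intro y; by_cases he : Even (y.val / L) <;> simp [hε, he]
  have hfeq : ∀ (x : ZMod 2) (y : ZMod (2 * L)),
      (stripsFieldT L h (x, y) : ℝ) = ε y := fun _ _ => rfl
  set Q : ZMod (2 * L) → ℝ := fun y =>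
    J * (4 - (sg (σ (0, y)) * sg (σ (1, y)) + sg (σ (0, y)) * sg (σ (0, y + 1))
      + sg (σ (1, y)) * sg (σ (0, y)) + sg (σ (1, y)) * sg (σ (1, y + 1))))
      - ε y * (sg (σ (0, y)) + sg (σ (1, y))) with hQ
  have hspin : ∀ t, spin σ t = sg (σ t) := fun _ => rfl
  have hspin1 : ∀ t, spin (fun _ : ZMod 2 × ZMod (2 * L) => true) t = 1 := fun _ => rfl
  have key : ham J (stripsFieldT L h) σ
      - ham J (stripsFieldT L h) (fun _ : ZMod 2 × ZMod (2 * L) => true)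
      = ∑ y : ZMod (2 * L), Q y := by
    rw [ham_row, ham_row, ← Finset.sum_sub_distrib]
    have hpt : ∀ y ∈ (Finset.univ : Finset (ZMod (2 * L))),
        ((-J * (spin σ (0, y) * spin σ (1, y) + spin σ (0, y) * spin σ (0, y + 1)
          + spin σ (1, y) * spin σ (0, y) + spin σ (1, y) * spin σ (1, y + 1))
          - (stripsFieldT (a := 2) (b := 2 * L) L h (0, y) * spin σ (0, y)
            + stripsFieldT (a := 2) (b := 2 * L) L h (1, y) * spin σ (1, y)))
        - (-J * (spin (fun _ : ZMod 2 × ZMod (2 * L) => true) (0, y) * spin (fun _ : ZMod 2 × ZMod (2 * L) => true) (1, y)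
            + spin (fun _ : ZMod 2 × ZMod (2 * L) => true) (0, y) * spin (fun _ : ZMod 2 × ZMod (2 * L) => true) (0, y + 1)
            + spin (fun _ : ZMod 2 × ZMod (2 * L) => true) (1, y) * spin (fun _ : ZMod 2 × ZMod (2 * L) => true) (0, y)
            + spin (fun _ : ZMod 2 × ZMod (2 * L) => true) (1, y) * spin (fun _ : ZMod 2 × ZMod (2 * L) => true) (1, y + 1))
          - (stripsFieldT (a := 2) (b := 2 * L) L h (0, y) * spin (fun _ : ZMod 2 × ZMod (2 * L) => true) (0, y)
            + stripsFieldT (a := 2) (b := 2 * L) L h (1, y) * spin (fun _ : ZMod 2 × ZMod (2 * L) => true) (1, y))))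
        = Q y + 2 * ε y := by
      intro y _
      simp only [hspin, hspin1, hfeq, hQ]
      ring
    rw [Finset.sum_congr rfl hpt, Finset.sum_add_distrib, ← Finset.mul_sum]
    rw [show (∑ y : ZMod (2 * L), ε y) = 0 from strips_sum_zero L hL h, mul_zero, add_zero]
  rw [key]
  have hcard : (Finset.univ : Finset (ZMod (2 * L))).card = 2 * L := by
    rw [Finset.card_univ, ZMod.card]
  have hL1 : (1 : ℝ) ≤ (L : ℝ) := by exact_mod_cast hL
  by_cases hu : ∀ y : ZMod (2 * L), σ (0, y) = σ (1, y)
  · -- Case 2: all rows uniform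
    obtain ⟨t, u, htu⟩ := hσ
    have hx : ∀ t : ZMod 2 × ZMod (2 * L), σ t = σ (0, t.2) := by
      intro t
      have h01 : ∀ x : ZMod 2, x = 0 ∨ x = 1 := by decide
      rcases h01 t.1 with hx0 | hx1
      · rw [← Prod.mk.eta (p := t), hx0]
      · rw [← Prod.mk.eta (p := t), hx1]
        exact (hu t.2).symm
    have hne : σ (0, t.2) ≠ σ (0, u.2) := by
      rw [← hx t, ← hx u]; exact htu
    obtain ⟨c, d, hcd, hc, hd⟩ := cycle_two_changes (fun y => σ (0, y)) _ _ hne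
    set G : ZMod (2 * L) → ℝ :=
      fun y => -(2 * h) + (if σ (0, y) = σ (0, y + 1) then 0 else 4 * J) with hG
    have hQG : ∀ y ∈ (Finset.univ : Finset (ZMod (2 * L))), G y ≤ Q y := by
      intro y _
      exact row_bound2 J h hh _ _ _ _ (ε y) (hεval y) (hu y) (hu (y + 1))
    have hsumG : ∑ y : ZMod (2 * L), G y ≥ 4 * (2 * J - h * (L : ℝ)) := by
      rw [hG]
      rw [Finset.sum_add_distrib, Finset.sum_const, hcard]
      have hge : (∑ y ∈ ({c, d} : Finset (ZMod (2 * L))),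
          (if σ (0, y) = σ (0, y + 1) then (0 : ℝ) else 4 * J))
          ≤ ∑ y : ZMod (2 * L), (if σ (0, y) = σ (0, y + 1) then (0 : ℝ) else 4 * J) := by
        apply Finset.sum_le_sum_of_subset_of_nonneg (Finset.subset_univ _)
        intro y _ _
        split
        · exact le_refl _
        · positivity
      rw [Finset.sum_pair hcd, if_neg hc, if_neg hd] at hge
      rw [nsmul_eq_mul]
      push_cast
      linarith
    calc ∑ y : ZMod (2 * L), Q y ≥ ∑ y : ZMod (2 * L), G y := Finset.sum_le_sum hQG
      _ ≥ 4 * (2 * J - h * (L : ℝ)) := hsumG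
  · push_neg at hu
    obtain ⟨m, hm⟩ := hu
    by_cases hv : ∀ y : ZMod (2 * L), σ (0, y) ≠ σ (1, y)
    · -- Case 1a: all rows mixed
      have hQG : ∀ y ∈ (Finset.univ : Finset (ZMod (2 * L))), (4 * J : ℝ) ≤ Q y := by
        intro y _
        have hb := row_bound J h hJ hh (σ (0, y)) (σ (1, y)) (σ (0, y + 1)) (σ (1, y + 1))
          (ε y) (hεval y)
        rw [if_neg (hv y)] at hb
        have : (0 : ℝ) ≤ (if ((σ (0, y) = σ (1, y)) ↔ (σ (0, y + 1) = σ (1, y + 1)))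
            then 0 else 2 * J) := by split <;> positivity
        calc (4 * J : ℝ) ≤ 4 * J + _ := le_add_of_nonneg_right this
          _ ≤ Q y := hb
      have := Finset.card_nsmul_le_sum Finset.univ Q (4 * J) hQG
      rw [hcard, nsmul_eq_mul] at this
      have hcast : ((2 * L : ℕ) : ℝ) = 2 * (L : ℝ) := by push_cast; ring
      rw [hcast] at this
      nlinarith
    · -- Case 1b: mixed and uniform rows both present
      push_neg at hv
      obtain ⟨w, hw⟩ := hv
      have hfm : (σ (0, m) == σ (1, m)) ≠ (σ (0, w) == σ (1, w)) := by
        simp [beq_iff_eq, hm, hw]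
      obtain ⟨c, d, hcd, hc, hd⟩ :=
        cycle_two_changes (fun y => σ (0, y) == σ (1, y)) m w hfm
      have hc' : ¬((σ (0, c) = σ (1, c)) ↔ (σ (0, c + 1) = σ (1, c + 1))) := by
        intro hiff
        apply hc
        rw [Bool.beq_eq_decide_eq, Bool.beq_eq_decide_eq, decide_eq_decide]
        exact hiff
      have hd' : ¬((σ (0, d) = σ (1, d)) ↔ (σ (0, d + 1) = σ (1, d + 1))) := by
        intro hiff
        apply hd
        rw [Bool.beq_eq_decide_eq, Bool.beq_eq_decide_eq, decide_eq_decide]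
        exact hiff
      set base : ZMod (2 * L) → ℝ :=
        fun y => if σ (0, y) = σ (1, y) then -(2 * h) else 4 * J with hbase
      set extra : ZMod (2 * L) → ℝ :=
        fun y => if ((σ (0, y) = σ (1, y)) ↔ (σ (0, y + 1) = σ (1, y + 1)))
          then 0 else 2 * J with hextra
      have hQG : ∀ y ∈ (Finset.univ : Finset (ZMod (2 * L))), base y + extra y ≤ Q y := by
        intro y _
        exact row_bound J h hJ hh (σ (0, y)) (σ (1, y)) (σ (0, y + 1)) (σ (1, y + 1))
          (ε y) (hεval y)
      have hbase_sum : ∑ y : ZMod (2 * L), base y ≥ 4 * J + (2 * (L : ℝ) - 1) * (-(2 * h)) := by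
        rw [← Finset.add_sum_erase _ base (Finset.mem_univ m)]
        have h1 : base m = 4 * J := by rw [hbase]; exact if_neg hm
        have h2 : (Finset.univ.erase m).card • (-(2 * h)) ≤ ∑ y ∈ Finset.univ.erase m, base y := by
          apply Finset.card_nsmul_le_sum
          intro y _
          rw [hbase]
          dsimp only
          split
          · exact le_refl _
          · nlinarith
        have h3 : (Finset.univ.erase m).card = 2 * L - 1 := by
          rw [Finset.card_erase_of_mem (Finset.mem_univ m), hcard]
        rw [h3, nsmul_eq_mul] at h2
        have h4 : ((2 * L - 1 : ℕ) : ℝ) = 2 * (L : ℝ) - 1 := by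
          have : (1 : ℕ) ≤ 2 * L := by omega
          push_cast [Nat.cast_sub this]
          ring
        rw [h4] at h2
        rw [h1]
        linarith
      have hextra_sum : ∑ y : ZMod (2 * L), extra y ≥ 4 * J := by
        have hge : (∑ y ∈ ({c, d} : Finset (ZMod (2 * L))), extra y)
            ≤ ∑ y : ZMod (2 * L), extra y := by
          apply Finset.sum_le_sum_of_subset_of_nonneg (Finset.subset_univ _)
          intro y _ _
          rw [hextra]
          dsimp only
          split <;> positivity
        rw [Finset.sum_pair hcd, hextra] at hge
        dsimp only at hge
        rw [if_neg hc', if_neg hd'] at hge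
        linarith
      have : ∑ y : ZMod (2 * L), (base y + extra y) ≤ ∑ y : ZMod (2 * L), Q y :=
        Finset.sum_le_sum hQG
      rw [Finset.sum_add_distrib] at this
      nlinarith
end
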